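/- Let M ∈ ℝ^{n₁×n₂} have rank r with compact singular value decomposition M = UΣVᵀ, where U ∈ ℝ^{n₁×r} and V ∈ ℝ^{n₂×r} have orthonormal columns and Σ is an r×r diagonal matrix with positive diagonal entries. Let Ω ⊆ {1,…,n₁}×{1,…,n₂} and let P_Ω be the sampling operator that keeps entries with indices in Ω and sets the rest to zero. Let T⊥ = { Z ∈ ℝ^{n₁×n₂} : UᵀZ = 0 and ZV = 0 } and let T be the orthogonal complement of T⊥ in ℝ^{n₁×n₂} with respect to the Frobenius inner product ⟨A,B⟩ = tr(AᵀB). Suppose: (1) there exists Y ∈ ℝ^{n₁×n₂} with P_Ω(Y) = Y and Y = UVᵀ + W for some W ∈ T⊥ with spectral norm ‖W‖ < 1; and (2) the only matrix Z ∈ T with P_Ω(Z) = 0 is Z = 0. Then for every X ∈ ℝ^{n₁×n₂} with X ≠ M and P_Ω(X) = P_Ω(M), one has ‖X‖_* > ‖M‖_*; in particular, M is the unique minimizer of the nuclear norm over { X : P_Ω(X) = P_Ω(M) }. -/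

import Mathlib

open Matrix

/-- The singular values of `X` (unordered). -/
noncomputable def singularValues {n₁ n₂ : ℕ} (X : Matrix (Fin n₁) (Fin n₂) ℝ) : Fin n₂ → ℝ :=
  fun i => Real.sqrt ((show (Xᵀ * X).IsHermitian by
    rw [IsHermitian, conjTranspose_eq_transpose_of_trivial, transpose_mul, transpose_transpose]).eigenvalues i)

/-- The nuclear norm: sum of the singular values. -/
noncomputable def nuclearNorm {n₁ n₂ : ℕ} (X : Matrix (Fin n₁) (Fin n₂) ℝ) : ℝ :=
  ∑ i, singularValues X i

/-- The spectral norm: the largest singular value. -/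
noncomputable def matSpectralNorm {n₁ n₂ : ℕ} (X : Matrix (Fin n₁) (Fin n₂) ℝ) : ℝ :=
  ⨆ i, singularValues X i

/-! ### Auxiliary lemmas -/

lemma NNM.eigen_data {n : ℕ} (S : Matrix (Fin n) (Fin n) ℝ) (hS : S.IsHermitian) :
    ∃ v : Fin n → Fin n → ℝ,
      (∀ i j, v i ⬝ᵥ v j = if i = j then 1 else 0) ∧
      (∀ j k, ∑ i, v i j * v i k = if j = k then 1 else 0) ∧
      (∀ i, S *ᵥ v i = hS.eigenvalues i • v i) := by
  refine ⟨fun i => ⇑(hS.eigenvectorBasis i), ?_, ?_, fun i => hS.mulVec_eigenvectorBasis i⟩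
  · intro i j
    have h := orthonormal_iff_ite.mp hS.eigenvectorBasis.orthonormal i j
    simpa [PiLp.inner_apply, dotProduct, RCLike.inner_apply, mul_comm] using h
  · intro j k
    have h := hS.eigenvectorBasis.sum_repr' (EuclideanSpace.single k (1:ℝ))
    have h2 := congrArg (fun f => (WithLp.equiv 2 _ f) j) h
    simp only [PiLp.inner_apply, RCLike.inner_apply] at h2
    simp [EuclideanSpace.single_apply, Finset.sum_apply, mul_comm] at h2 ⊢
    exact h2

lemma NNM.trace_eq_sum_quad {n : ℕ} (C : Matrix (Fin n) (Fin n) ℝ) (v : Fin n → Fin n → ℝ)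
    (hv : ∀ j k, ∑ i, v i j * v i k = if j = k then 1 else 0) :
    trace C = ∑ i, v i ⬝ᵥ (C *ᵥ v i) := by
  simp only [dotProduct, mulVec, Finset.mul_sum]
  rw [Finset.sum_comm]
  have key : ∀ j : Fin n, ∑ i, ∑ k, v i j * (C j k * v i k) = C j j := by
    intro j
    rw [Finset.sum_comm]
    have h2 : ∀ k, ∑ i, v i j * (C j k * v i k) = C j k * ∑ i, v i j * v i k := by
      intro k; rw [Finset.mul_sum]; exact Finset.sum_congr rfl fun i _ => by ring
    simp [h2, hv, mul_ite]
  simp [key, trace, diag]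

lemma NNM.dot_mulVec_eq {n₁ n₂ : ℕ} (A B : Matrix (Fin n₁) (Fin n₂) ℝ) (x y : Fin n₂ → ℝ) :
    (B *ᵥ x) ⬝ᵥ (A *ᵥ y) = x ⬝ᵥ ((Bᵀ * A) *ᵥ y) := by
  rw [dotProduct_mulVec, dotProduct_mulVec, ← vecMul_vecMul, vecMul_transpose]

lemma NNM.dot_cs {m : ℕ} (a b : Fin m → ℝ) :
    a ⬝ᵥ b ≤ Real.sqrt (a ⬝ᵥ a) * Real.sqrt (b ⬝ᵥ b) := by
  have h := Real.sum_mul_le_sqrt_mul_sqrt Finset.univ a b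
  simpa [dotProduct, sq] using h

lemma NNM.expand_basis {n : ℕ} (v : Fin n → Fin n → ℝ)
    (hcomp : ∀ j k, ∑ i, v i j * v i k = if j = k then 1 else 0) (x : Fin n → ℝ) :
    ∑ i, (v i ⬝ᵥ x) • v i = x := by
  funext l
  rw [Finset.sum_apply]
  simp only [Pi.smul_apply, smul_eq_mul, dotProduct, Finset.sum_mul]
  rw [Finset.sum_comm]
  have : ∀ k, ∑ i, v i k * x k * v i l = x k * ∑ i, v i k * v i l := by
    intro k; rw [Finset.mul_sum]; exact Finset.sum_congr rfl fun i _ => by ring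
  simp [this, hcomp, mul_ite]

lemma NNM.parseval {n : ℕ} (v : Fin n → Fin n → ℝ)
    (hcomp : ∀ j k, ∑ i, v i j * v i k = if j = k then 1 else 0) (x : Fin n → ℝ) :
    ∑ i, (v i ⬝ᵥ x) ^ 2 = x ⬝ᵥ x := by
  calc ∑ i, (v i ⬝ᵥ x) ^ 2 = (∑ i, (v i ⬝ᵥ x) • v i) ⬝ᵥ x := by
        simp only [dotProduct, Finset.sum_apply, Pi.smul_apply, smul_eq_mul, Finset.sum_mul]
        rw [Finset.sum_comm]
        refine Finset.sum_congr rfl fun i _ => ?_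
        rw [sq, Finset.mul_sum]
        exact Finset.sum_congr rfl fun l _ => by
          rw [Finset.sum_mul]
          exact Finset.sum_congr rfl fun k _ => by ring
    _ = x ⬝ᵥ x := by rw [NNM.expand_basis v hcomp x]

lemma NNM.dotProduct_sum' {n k : ℕ} (x : Fin n → ℝ) (f : Fin k → Fin n → ℝ) :
    x ⬝ᵥ (∑ i, f i) = ∑ i, x ⬝ᵥ f i := by
  simp only [dotProduct, Finset.sum_apply, Finset.mul_sum]
  rw [Finset.sum_comm]

lemma NNM.sum_dotProduct' {n k : ℕ} (x : Fin n → ℝ) (f : Fin k → Fin n → ℝ) :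
    (∑ i, f i) ⬝ᵥ x = ∑ i, f i ⬝ᵥ x := by
  simp only [dotProduct, Finset.sum_apply, Finset.sum_mul]
  rw [Finset.sum_comm]

lemma NNM.mulVec_sum' {m n k : ℕ} (A : Matrix (Fin m) (Fin n) ℝ) (f : Fin k → Fin n → ℝ) :
    A *ᵥ (∑ i, f i) = ∑ i, A *ᵥ f i := by
  funext j
  simp only [mulVec, dotProduct, Finset.sum_apply, Finset.mul_sum]
  rw [Finset.sum_comm]

lemma NNM.sum_mulVec' {m n k : ℕ} (f : Fin k → Matrix (Fin m) (Fin n) ℝ) (x : Fin n → ℝ) :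
    (∑ i, f i) *ᵥ x = ∑ i, f i *ᵥ x := by
  funext j
  simp only [mulVec, dotProduct, Matrix.sum_apply, Finset.sum_apply, Finset.sum_mul]
  rw [Finset.sum_comm]

lemma NNM.sv_le_spectral {n₁ n₂ : ℕ} (W : Matrix (Fin n₁) (Fin n₂) ℝ) (i : Fin n₂) :
    singularValues W i ≤ matSpectralNorm W :=
  le_ciSup (Set.Finite.bddAbove (Set.finite_range _)) i

lemma NNM.spectralNorm_nonneg {n₁ n₂ : ℕ} (W : Matrix (Fin n₁) (Fin n₂) ℝ) :
    0 ≤ matSpectralNorm W :=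
  Real.iSup_nonneg fun _ => Real.sqrt_nonneg _

lemma NNM.mulVec_sq_le_spectral {n₁ n₂ : ℕ} (W : Matrix (Fin n₁) (Fin n₂) ℝ) (x : Fin n₂ → ℝ) :
    (W *ᵥ x) ⬝ᵥ (W *ᵥ x) ≤ matSpectralNorm W ^ 2 * (x ⬝ᵥ x) := by
  have hAA : Wᴴ = Wᵀ := conjTranspose_eq_transpose_of_trivial W
  have hS := Matrix.isHermitian_conjTranspose_mul_self W
  obtain ⟨u, hortho, hcomp, heig⟩ := NNM.eigen_data (Wᴴ * W) hS
  have heig' : ∀ i, (Wᵀ * W) *ᵥ u i = hS.eigenvalues i • u i := fun i => by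
    rw [← hAA]; exact heig i
  have hx : (Wᵀ * W) *ᵥ x = ∑ i, (u i ⬝ᵥ x) • (hS.eigenvalues i • u i) := by
    conv_lhs => rw [← NNM.expand_basis u hcomp x]
    rw [NNM.mulVec_sum']
    exact Finset.sum_congr rfl fun i _ => by rw [mulVec_smul, heig' i]
  rw [NNM.dot_mulVec_eq, hx, NNM.dotProduct_sum']
  have hterm : ∀ i, x ⬝ᵥ ((u i ⬝ᵥ x) • hS.eigenvalues i • u i)
      = hS.eigenvalues i * (u i ⬝ᵥ x) ^ 2 := by
    intro i
    rw [dotProduct_smul, dotProduct_smul, smul_eq_mul, smul_eq_mul, dotProduct_comm]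
    ring
  rw [Finset.sum_congr rfl fun i _ => hterm i]
  have hbound : ∀ i, hS.eigenvalues i * (u i ⬝ᵥ x) ^ 2
      ≤ matSpectralNorm W ^ 2 * (u i ⬝ᵥ x) ^ 2 := by
    intro i
    apply mul_le_mul_of_nonneg_right _ (sq_nonneg _)
    have h1 : hS.eigenvalues i = (singularValues W i) ^ 2 := by
      rw [singularValues]
      exact (Real.sq_sqrt (Matrix.eigenvalues_conjTranspose_mul_self_nonneg W i)).symm
    rw [h1]
    exact pow_le_pow_left₀ (Real.sqrt_nonneg _) (NNM.sv_le_spectral W i) 2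
  calc ∑ i, hS.eigenvalues i * (u i ⬝ᵥ x) ^ 2
      ≤ ∑ i, matSpectralNorm W ^ 2 * (u i ⬝ᵥ x) ^ 2 := Finset.sum_le_sum fun i _ => hbound i
    _ = matSpectralNorm W ^ 2 * (x ⬝ᵥ x) := by rw [← Finset.mul_sum, NNM.parseval u hcomp x]

lemma NNM.trace_le_c_mul_nuclear {n₁ n₂ : ℕ} (A B : Matrix (Fin n₁) (Fin n₂) ℝ) (c : ℝ)
    (hc : 0 ≤ c) (hB : ∀ x : Fin n₂ → ℝ, (B *ᵥ x) ⬝ᵥ (B *ᵥ x) ≤ c ^ 2 * (x ⬝ᵥ x)) :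
    trace (Bᵀ * A) ≤ c * nuclearNorm A := by
  have hAA : Aᴴ = Aᵀ := conjTranspose_eq_transpose_of_trivial A
  have hS := Matrix.isHermitian_conjTranspose_mul_self A
  obtain ⟨v, hortho, hcomp, heig⟩ := NNM.eigen_data (Aᴴ * A) hS
  have heig' : ∀ i, (Aᵀ * A) *ᵥ v i = hS.eigenvalues i • v i := fun i => by
    rw [← hAA]; exact heig i
  rw [NNM.trace_eq_sum_quad _ v hcomp]
  have hterm : ∀ i, v i ⬝ᵥ ((Bᵀ * A) *ᵥ v i) ≤ c * singularValues A i := by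
    intro i
    rw [← NNM.dot_mulVec_eq]
    have hAv : (A *ᵥ v i) ⬝ᵥ (A *ᵥ v i) = hS.eigenvalues i := by
      rw [NNM.dot_mulVec_eq, heig' i, dotProduct_smul, smul_eq_mul, hortho i i]
      simp
    have hBv : Real.sqrt ((B *ᵥ v i) ⬝ᵥ (B *ᵥ v i)) ≤ c := by
      have h1 := hB (v i)
      rw [hortho i i] at h1
      simp at h1
      calc Real.sqrt ((B *ᵥ v i) ⬝ᵥ (B *ᵥ v i)) ≤ Real.sqrt (c ^ 2) :=
            Real.sqrt_le_sqrt h1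
        _ = c := Real.sqrt_sq hc
    calc (B *ᵥ v i) ⬝ᵥ (A *ᵥ v i)
        ≤ Real.sqrt ((B *ᵥ v i) ⬝ᵥ (B *ᵥ v i)) * Real.sqrt ((A *ᵥ v i) ⬝ᵥ (A *ᵥ v i)) :=
          NNM.dot_cs _ _
      _ ≤ c * singularValues A i := by
          rw [hAv]
          exact mul_le_mul_of_nonneg_right hBv (Real.sqrt_nonneg _)
  calc ∑ i, v i ⬝ᵥ ((Bᵀ * A) *ᵥ v i) ≤ ∑ i, c * singularValues A i :=
        Finset.sum_le_sum fun i _ => hterm i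
    _ = c * nuclearNorm A := by rw [nuclearNorm, Finset.mul_sum]

lemma NNM.mul_vecMulVec {m n k : ℕ} (C : Matrix (Fin k) (Fin m) ℝ) (a : Fin m → ℝ)
    (b : Fin n → ℝ) : C * vecMulVec a b = vecMulVec (C *ᵥ a) b := by
  ext i j
  simp [Matrix.mul_apply, vecMulVec_apply, mulVec, dotProduct, Finset.sum_mul, mul_assoc]

lemma NNM.vecMulVec_mul {m n k : ℕ} (a : Fin m → ℝ) (b : Fin n → ℝ)
    (C : Matrix (Fin n) (Fin k) ℝ) : vecMulVec a b * C = vecMulVec a (Cᵀ *ᵥ b) := by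
  ext i j
  simp only [Matrix.mul_apply, vecMulVec_apply, mulVec, dotProduct, transpose_apply,
    Finset.mul_sum]
  exact Finset.sum_congr rfl fun k _ => by ring

lemma NNM.vecMulVec_mulVec {m n : ℕ} (a : Fin m → ℝ) (b : Fin n → ℝ) (x : Fin n → ℝ) :
    vecMulVec a b *ᵥ x = (b ⬝ᵥ x) • a := by
  funext i
  simp only [mulVec, dotProduct, vecMulVec_apply, Pi.smul_apply, smul_eq_mul, Finset.sum_mul]
  exact Finset.sum_congr rfl fun k _ => by ring

lemma NNM.trace_vecMulVecT_mul {m n : ℕ} (a : Fin m → ℝ) (b : Fin n → ℝ)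
    (C : Matrix (Fin m) (Fin n) ℝ) :
    trace ((vecMulVec a b)ᵀ * C) = a ⬝ᵥ (C *ᵥ b) := by
  simp only [trace, diag, Matrix.mul_apply, transpose_apply, vecMulVec_apply, mulVec, dotProduct,
    Finset.mul_sum]
  rw [Finset.sum_comm]
  exact Finset.sum_congr rfl fun i _ => Finset.sum_congr rfl fun j _ => by ring

lemma NNM.vecMul_eq_transpose_mulVec {m n : ℕ} (A : Matrix (Fin m) (Fin n) ℝ) (x : Fin m → ℝ) :
    x ᵥ* A = Aᵀ *ᵥ x := by
  funext j
  simp [vecMul, mulVec, dotProduct, transpose_apply, mul_comm]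

lemma NNM.transpose_zero_of {m n k : ℕ} {A : Matrix (Fin m) (Fin n) ℝ}
    {B : Matrix (Fin n) (Fin k) ℝ} (h : A * B = 0) : Bᵀ * Aᵀ = 0 := by
  have := congrArg transpose h
  simpa [Matrix.transpose_mul] using this

set_option maxHeartbeats 2000000 in
/-- Uniqueness condition for nuclear norm minimization (Candès–Recht, Lemma 3.1):
if there is a dual certificate `Y = U Vᵀ + W` supported on `Ω` with `W ∈ T⊥`,
`‖W‖ < 1`, and `P_Ω` restricted to `T` is injective, then `M` is the unique
nuclear norm minimizer subject to `P_Ω(X) = P_Ω(M)`.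
Here `T⊥ = {Z : Uᵀ Z = 0 ∧ Z V = 0}` and `Z ∈ T` iff `⟨W, Z⟩ = tr(Wᵀ Z) = 0`
for all `W ∈ T⊥`. -/
theorem nnm_unique_minimizer (n₁ n₂ r : ℕ) (M : Matrix (Fin n₁) (Fin n₂) ℝ)
    (U : Matrix (Fin n₁) (Fin r) ℝ) (V : Matrix (Fin n₂) (Fin r) ℝ) (σ : Fin r → ℝ)
    (hU : Uᵀ * U = 1) (hV : Vᵀ * V = 1) (hσ : ∀ i, 0 < σ i)
    (hM : M = U * Matrix.diagonal σ * Vᵀ) (hrank : M.rank = r)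
    (Ω : Finset (Fin n₁ × Fin n₂))
    (PΩ : Matrix (Fin n₁) (Fin n₂) ℝ → Matrix (Fin n₁) (Fin n₂) ℝ)
    (hPΩ : ∀ A i j, PΩ A i j = if (i, j) ∈ Ω then A i j else 0)
    (hcert : ∃ Y W : Matrix (Fin n₁) (Fin n₂) ℝ,
        PΩ Y = Y ∧ Uᵀ * W = 0 ∧ W * V = 0 ∧ Y = U * Vᵀ + W ∧ matSpectralNorm W < 1)
    (hinj : ∀ Z : Matrix (Fin n₁) (Fin n₂) ℝ,
        (∀ W : Matrix (Fin n₁) (Fin n₂) ℝ, Uᵀ * W = 0 → W * V = 0 → (Wᵀ * Z).trace = 0) →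
        PΩ Z = 0 → Z = 0) :
    ∀ X : Matrix (Fin n₁) (Fin n₂) ℝ, X ≠ M → PΩ X = PΩ M →
      nuclearNorm M < nuclearNorm X := by
  intro X hne hproj
  obtain ⟨Y, W, hYΩ, hUW, hWV, hYdef, hWnorm⟩ := hcert
  set Z : Matrix (Fin n₁) (Fin n₂) ℝ := X - M with hZdef
  have hXMZ : X = M + Z := by rw [hZdef]; abel
  have hZne : Z ≠ 0 := fun h => hne (by rw [hXMZ, h, add_zero])
  have hZΩ : ∀ i j, (i, j) ∈ Ω → Z i j = 0 := by
    intro i j h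
    have h2 := congrFun (congrFun hproj i) j
    rw [hPΩ, hPΩ, if_pos h, if_pos h] at h2
    simp [hZdef, Matrix.sub_apply, h2]
  have hPΩZ : PΩ Z = 0 := by
    ext i j
    rw [hPΩ]
    by_cases h : (i, j) ∈ Ω
    · rw [if_pos h, hZΩ i j h]; rfl
    · rw [if_neg h]; rfl
  set Z₂ : Matrix (Fin n₁) (Fin n₂) ℝ := (1 - U * Uᵀ) * Z * (1 - V * Vᵀ) with hZ₂def
  have hUZ₂ : Uᵀ * Z₂ = 0 := by
    have e1 : Uᵀ * (1 - U * Uᵀ) = 0 := by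
      rw [Matrix.mul_sub, Matrix.mul_one, ← Matrix.mul_assoc, hU, Matrix.one_mul, sub_self]
    rw [hZ₂def, ← Matrix.mul_assoc, ← Matrix.mul_assoc, e1, Matrix.zero_mul, Matrix.zero_mul]
  have hZ₂V : Z₂ * V = 0 := by
    have e2 : (1 - V * Vᵀ) * V = 0 := by
      rw [Matrix.sub_mul, Matrix.one_mul, Matrix.mul_assoc, hV, Matrix.mul_one, sub_self]
    rw [hZ₂def, Matrix.mul_assoc, e2, Matrix.mul_zero]
  have hsplit : Z - Z₂ = U * (Uᵀ * Z) + ((1 - U * Uᵀ) * Z * V) * Vᵀ := by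
    have e3 : Z₂ = (1 - U * Uᵀ) * Z - ((1 - U * Uᵀ) * Z * V) * Vᵀ := by
      rw [hZ₂def, Matrix.mul_sub, Matrix.mul_one, Matrix.mul_assoc ((1 - U * Uᵀ) * Z) V Vᵀ]
    have e4 : (1 - U * Uᵀ) * Z = Z - U * (Uᵀ * Z) := by
      rw [Matrix.sub_mul, Matrix.one_mul, Matrix.mul_assoc]
    rw [e3, e4]
    abel
  have hT : ∀ W' : Matrix (Fin n₁) (Fin n₂) ℝ, Uᵀ * W' = 0 → W' * V = 0 →
      trace (W'ᵀ * (Z - Z₂)) = 0 := by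
    intro W' h1 h2
    have h1' : W'ᵀ * U = 0 := by
      have := NNM.transpose_zero_of h1; simpa using this
    have h2' : Vᵀ * W'ᵀ = 0 := NNM.transpose_zero_of h2
    rw [hsplit, Matrix.mul_add, trace_add]
    have t1 : W'ᵀ * (U * (Uᵀ * Z)) = 0 := by
      rw [← Matrix.mul_assoc, h1', Matrix.zero_mul]
    have t2 : trace (W'ᵀ * (((1 - U * Uᵀ) * Z * V) * Vᵀ)) = 0 := by
      rw [← Matrix.mul_assoc, Matrix.trace_mul_comm, ← Matrix.mul_assoc, h2',
        Matrix.zero_mul, trace_zero]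
    rw [t1, t2, trace_zero, add_zero]
  by_cases hZ₂0 : Z₂ = 0
  · exfalso
    refine hZne (hinj Z ?_ hPΩZ)
    intro W' h1 h2
    have := hT W' h1 h2
    rwa [hZ₂0, sub_zero] at this
  -- main case
  have hAA2 : Z₂ᴴ = Z₂ᵀ := conjTranspose_eq_transpose_of_trivial Z₂
  have hS2 := Matrix.isHermitian_conjTranspose_mul_self Z₂
  obtain ⟨v, hortho, hcomp, heig⟩ := NNM.eigen_data (Z₂ᴴ * Z₂) hS2
  set lam : Fin n₂ → ℝ := hS2.eigenvalues with hlamdef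
  have heig' : ∀ i, (Z₂ᵀ * Z₂) *ᵥ v i = lam i • v i := fun i => by
    rw [← hAA2]; exact heig i
  have hlam0 : ∀ i, 0 ≤ lam i := fun i =>
    Matrix.eigenvalues_conjTranspose_mul_self_nonneg Z₂ i
  have hZv : ∀ i j, (Z₂ *ᵥ v i) ⬝ᵥ (Z₂ *ᵥ v j) = if i = j then lam j else 0 := by
    intro i j
    rw [NNM.dot_mulVec_eq, heig' j, dotProduct_smul, smul_eq_mul, hortho i j]
    split <;> simp
  have hvan : ∀ i, lam i = 0 → Z₂ *ᵥ v i = 0 := by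
    intro i h
    have := hZv i i
    rw [if_pos rfl, h] at this
    exact dotProduct_self_eq_zero.mp this
  have hVv : ∀ i, 0 < lam i → Vᵀ *ᵥ v i = 0 := by
    intro i hpos
    have h5 : Vᵀ * Z₂ᵀ = 0 := NNM.transpose_zero_of hZ₂V
    have h6 : lam i • (Vᵀ *ᵥ v i) = 0 := by
      calc lam i • (Vᵀ *ᵥ v i) = Vᵀ *ᵥ (lam i • v i) := (mulVec_smul _ _ _).symm
        _ = Vᵀ *ᵥ ((Z₂ᵀ * Z₂) *ᵥ v i) := by rw [heig' i]
        _ = ((Vᵀ * Z₂ᵀ) * Z₂) *ᵥ v i := by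
            rw [Matrix.mulVec_mulVec, Matrix.mul_assoc]
        _ = 0 := by rw [h5, Matrix.zero_mul, Matrix.zero_mulVec]
    rcases smul_eq_zero.mp h6 with h | h
    · exact absurd h (ne_of_gt hpos)
    · exact h
  set W₀ : Matrix (Fin n₁) (Fin n₂) ℝ :=
    ∑ i, (Real.sqrt (lam i))⁻¹ • vecMulVec (Z₂ *ᵥ v i) (v i) with hW₀def
  have hUW₀ : Uᵀ * W₀ = 0 := by
    rw [hW₀def, Matrix.mul_sum]
    refine Finset.sum_eq_zero fun i _ => ?_
    rw [Matrix.mul_smul, NNM.mul_vecMulVec, Matrix.mulVec_mulVec, hUZ₂, Matrix.zero_mulVec]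
    rw [show vecMulVec (0 : Fin r → ℝ) (v i) = 0 by ext a b; simp [vecMulVec_apply]]
    simp
  have hW₀V : W₀ * V = 0 := by
    rw [hW₀def, Matrix.sum_mul]
    refine Finset.sum_eq_zero fun i _ => ?_
    rw [Matrix.smul_mul, NNM.vecMulVec_mul]
    rcases (hlam0 i).eq_or_lt with h | h
    · rw [hvan i h.symm]
      rw [show vecMulVec (0 : Fin n₁ → ℝ) (Vᵀ *ᵥ v i) = 0 by ext a b; simp [vecMulVec_apply]]
      simp
    · rw [hVv i h]
      rw [show vecMulVec (Z₂ *ᵥ v i) (0 : Fin r → ℝ) = 0 by ext a b; simp [vecMulVec_apply]]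
      simp
  have hsqrtlam : ∀ i, (Real.sqrt (lam i))⁻¹ * lam i = Real.sqrt (lam i) := by
    intro i
    rcases (hlam0 i).eq_or_lt with h | h
    · rw [← h]; simp
    · have hne0 : Real.sqrt (lam i) ≠ 0 := ne_of_gt (Real.sqrt_pos.mpr h)
      rw [inv_mul_eq_div, div_eq_iff hne0]
      exact (Real.mul_self_sqrt (le_of_lt h)).symm
  have hnnZ₂ : nuclearNorm Z₂ = ∑ i, Real.sqrt (lam i) := by
    rw [nuclearNorm]
    exact Finset.sum_congr rfl fun i _ => rfl
  have htrW₀Z₂ : trace (W₀ᵀ * Z₂) = nuclearNorm Z₂ := by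
    rw [hW₀def, Matrix.transpose_sum, Matrix.sum_mul, trace_sum]
    rw [hnnZ₂]
    refine Finset.sum_congr rfl fun i _ => ?_
    rw [Matrix.transpose_smul, Matrix.smul_mul, trace_smul, NNM.trace_vecMulVecT_mul,
      hZv i i, if_pos rfl, smul_eq_mul, hsqrtlam i]
  have hnucpos : 0 < nuclearNorm Z₂ := by
    have hsum : trace (Z₂ᵀ * Z₂) = ∑ i, lam i := by
      rw [NNM.trace_eq_sum_quad _ v hcomp]
      refine Finset.sum_congr rfl fun i _ => ?_
      rw [heig' i, dotProduct_smul, smul_eq_mul, hortho i i, if_pos rfl, mul_one]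
    have hform : trace (Z₂ᵀ * Z₂) = ∑ j, ∑ i, Z₂ i j * Z₂ i j := by
      simp [trace, diag, Matrix.mul_apply]
    obtain ⟨i0, j0, h0⟩ : ∃ i j, Z₂ i j ≠ 0 := by
      by_contra h
      push_neg at h
      exact hZ₂0 (by ext i j; simpa using h i j)
    have htrpos : 0 < trace (Z₂ᵀ * Z₂) := by
      rw [hform]
      refine Finset.sum_pos' (fun j _ => Finset.sum_nonneg fun i _ => mul_self_nonneg _)
        ⟨j0, Finset.mem_univ _, ?_⟩
      exact Finset.sum_pos' (fun i _ => mul_self_nonneg _)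
        ⟨i0, Finset.mem_univ _, mul_self_pos.mpr h0⟩
    obtain ⟨i1, hi1⟩ : ∃ i, 0 < lam i := by
      by_contra h
      push_neg at h
      have : ∑ i, lam i = 0 :=
        Finset.sum_eq_zero fun i _ => le_antisymm (h i) (hlam0 i)
      rw [hsum, this] at htrpos
      exact lt_irrefl 0 htrpos
    rw [hnnZ₂]
    calc (0:ℝ) < Real.sqrt (lam i1) := Real.sqrt_pos.mpr hi1
      _ ≤ ∑ i, Real.sqrt (lam i) :=
        Finset.single_le_sum (fun i _ => Real.sqrt_nonneg _) (Finset.mem_univ i1)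
  -- operator norm bound for B = U Vᵀ + W₀
  set B : Matrix (Fin n₁) (Fin n₂) ℝ := U * Vᵀ + W₀ with hBdef
  have hUVTUVT : (U * Vᵀ)ᵀ * (U * Vᵀ) = V * Vᵀ := by
    rw [Matrix.transpose_mul, Matrix.transpose_transpose, Matrix.mul_assoc,
      ← Matrix.mul_assoc Uᵀ U Vᵀ, hU, Matrix.one_mul]
  have hVUW₀ : (U * Vᵀ)ᵀ * W₀ = 0 := by
    rw [Matrix.transpose_mul, Matrix.transpose_transpose, Matrix.mul_assoc, hUW₀,
      Matrix.mul_zero]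
  set d : Fin n₂ → ℝ := fun i => ((Real.sqrt (lam i))⁻¹) ^ 2 * lam i with hd
  have hd01 : ∀ i, d i = 0 ∨ d i = 1 := by
    intro i
    rcases (hlam0 i).eq_or_lt with h | h
    · left; rw [hd]; simp [← h]
    · right
      rw [hd]
      simp only
      rw [inv_pow, Real.sq_sqrt (le_of_lt h), inv_mul_cancel₀ (ne_of_gt h)]
  have hdpos : ∀ i, d i ≠ 0 → 0 < lam i := by
    intro i hi
    rcases (hlam0 i).eq_or_lt with h | h
    · exact absurd (by rw [hd]; simp [← h]) hi
    · exact h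
  have hBop : ∀ x : Fin n₂ → ℝ, (B *ᵥ x) ⬝ᵥ (B *ᵥ x) ≤ (1:ℝ) ^ 2 * (x ⬝ᵥ x) := by
    intro x
    set w : Fin r → ℝ := Vᵀ *ᵥ x with hw
    set a : Fin n₁ → ℝ := (U * Vᵀ) *ᵥ x with ha
    set b : Fin n₁ → ℝ := W₀ *ᵥ x with hb
    have hBx : B *ᵥ x = a + b := by rw [hBdef, Matrix.add_mulVec]
    have haa : a ⬝ᵥ a = w ⬝ᵥ w := by
      rw [ha, hw, NNM.dot_mulVec_eq, hUVTUVT, ← Matrix.mulVec_mulVec, dotProduct_mulVec,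
        NNM.vecMul_eq_transpose_mulVec]
    have hab : a ⬝ᵥ b = 0 := by
      rw [ha, hb, NNM.dot_mulVec_eq, hVUW₀, Matrix.zero_mulVec, dotProduct_zero]
    have hb_eq : b = ∑ i, ((Real.sqrt (lam i))⁻¹ * (v i ⬝ᵥ x)) • (Z₂ *ᵥ v i) := by
      rw [hb, hW₀def, NNM.sum_mulVec']
      refine Finset.sum_congr rfl fun i _ => ?_
      rw [smul_mulVec, NNM.vecMulVec_mulVec, smul_smul]
    have hbb : b ⬝ᵥ b = ∑ i, d i * (v i ⬝ᵥ x) ^ 2 := by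
      rw [hb_eq, NNM.sum_dotProduct']
      refine Finset.sum_congr rfl fun i _ => ?_
      rw [NNM.dotProduct_sum']
      have hterm : ∀ j, (((Real.sqrt (lam i))⁻¹ * (v i ⬝ᵥ x)) • (Z₂ *ᵥ v i)) ⬝ᵥ
          (((Real.sqrt (lam j))⁻¹ * (v j ⬝ᵥ x)) • (Z₂ *ᵥ v j))
          = if i = j then ((Real.sqrt (lam i))⁻¹ * (v i ⬝ᵥ x)) *
              (((Real.sqrt (lam j))⁻¹ * (v j ⬝ᵥ x)) * lam j) else 0 := by
        intro j
        rw [smul_dotProduct, dotProduct_smul, smul_eq_mul, smul_eq_mul, hZv i j]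
        split <;> ring
      rw [Finset.sum_congr rfl fun j _ => hterm j]
      rw [Finset.sum_ite_eq Finset.univ i]
      simp only [Finset.mem_univ, if_true, hd]
      ring
    set e : Fin n₂ → ℝ := fun i => d i * (v i ⬝ᵥ x) with he
    set p : Fin n₂ → ℝ := V *ᵥ w with hp
    set q : Fin n₂ → ℝ := ∑ i, e i • v i with hq
    have hxp : x ⬝ᵥ p = w ⬝ᵥ w := by
      rw [hp, hw, dotProduct_mulVec, NNM.vecMul_eq_transpose_mulVec]
    have hpp : p ⬝ᵥ p = w ⬝ᵥ w := by
      rw [hp, NNM.dot_mulVec_eq, hV, Matrix.one_mulVec]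
    have hpv : ∀ i, d i ≠ 0 → p ⬝ᵥ v i = 0 := by
      intro i hi
      rw [hp, dotProduct_comm, dotProduct_mulVec, NNM.vecMul_eq_transpose_mulVec,
        hVv i (hdpos i hi), zero_dotProduct]
    have hxq : x ⬝ᵥ q = ∑ i, d i * (v i ⬝ᵥ x) ^ 2 := by
      rw [hq, NNM.dotProduct_sum']
      refine Finset.sum_congr rfl fun i _ => ?_
      rw [dotProduct_smul, smul_eq_mul, dotProduct_comm, he]
      simp only
      ring
    have hpq : p ⬝ᵥ q = 0 := by
      rw [hq, NNM.dotProduct_sum']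
      refine Finset.sum_eq_zero fun i _ => ?_
      rw [dotProduct_smul, smul_eq_mul]
      by_cases hi : d i = 0
      · rw [he]; simp [hi]
      · rw [hpv i hi, mul_zero]
    have hqq : q ⬝ᵥ q = ∑ i, d i * (v i ⬝ᵥ x) ^ 2 := by
      rw [hq, NNM.sum_dotProduct']
      refine Finset.sum_congr rfl fun i _ => ?_
      have hterm : ∀ j, (e i • v i) ⬝ᵥ (e j • v j)
          = if i = j then e i * (e j * 1) else 0 := by
        intro j
        rw [smul_dotProduct, dotProduct_smul, smul_eq_mul, smul_eq_mul, hortho i j]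
        split <;> ring
      rw [NNM.dotProduct_sum', Finset.sum_congr rfl fun j _ => hterm j,
        Finset.sum_ite_eq Finset.univ i]
      simp only [Finset.mem_univ, if_true, mul_one, he]
      rcases hd01 i with h | h <;> rw [h] <;> ring
    have hbess : w ⬝ᵥ w + ∑ i, d i * (v i ⬝ᵥ x) ^ 2 ≤ x ⬝ᵥ x := by
      have hy : (0:ℝ) ≤ (x - p - q) ⬝ᵥ (x - p - q) :=
        Finset.sum_nonneg fun k _ => mul_self_nonneg _
      have hexp : (x - p - q) ⬝ᵥ (x - p - q) = x ⬝ᵥ x - x ⬝ᵥ p - x ⬝ᵥ q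
          - (p ⬝ᵥ x - p ⬝ᵥ p - p ⬝ᵥ q) - (q ⬝ᵥ x - q ⬝ᵥ p - q ⬝ᵥ q) := by
        simp only [sub_dotProduct, dotProduct_sub]
        ring
      have hcomm1 : p ⬝ᵥ x = w ⬝ᵥ w := by rw [dotProduct_comm]; exact hxp
      have hcomm2 : q ⬝ᵥ x = ∑ i, d i * (v i ⬝ᵥ x) ^ 2 := by
        rw [dotProduct_comm]; exact hxq
      have hcomm3 : q ⬝ᵥ p = 0 := by rw [dotProduct_comm]; exact hpq
      rw [hexp, hxp, hxq, hcomm1, hpp, hpq, hcomm2, hcomm3, hqq] at hy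
      linarith
    have hexp2 : (a + b) ⬝ᵥ (a + b) = a ⬝ᵥ a + 2 * (a ⬝ᵥ b) + b ⬝ᵥ b := by
      simp only [add_dotProduct, dotProduct_add]
      rw [dotProduct_comm b a]
      ring
    rw [hBx, hexp2, haa, hab, hbb, one_pow, one_mul]
    linarith
  -- trace ((U Vᵀ)ᵀ M) = nuclear norm of M
  have hAAM : Mᴴ = Mᵀ := conjTranspose_eq_transpose_of_trivial M
  have hSM := Matrix.isHermitian_conjTranspose_mul_self M
  obtain ⟨u, huo, huc, hue⟩ := NNM.eigen_data (Mᴴ * M) hSM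
  set mu : Fin n₂ → ℝ := hSM.eigenvalues with hmudef
  have hue' : ∀ i, (Mᵀ * M) *ᵥ u i = mu i • u i := fun i => by
    rw [← hAAM]; exact hue i
  have hmu0 : ∀ i, 0 ≤ mu i := fun i =>
    Matrix.eigenvalues_conjTranspose_mul_self_nonneg M i
  set D : Matrix (Fin r) (Fin r) ℝ := Matrix.diagonal σ with hDdef
  have hMTM : Mᵀ * M = V * ((D * D) * Vᵀ) := by
    rw [hM]
    simp only [Matrix.transpose_mul, Matrix.transpose_transpose, Matrix.mul_assoc]
    rw [show Dᵀ = D from by rw [hDdef, Matrix.diagonal_transpose]]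
    rw [← Matrix.mul_assoc Uᵀ U, hU, Matrix.one_mul, ← Matrix.mul_assoc D D Vᵀ]
  have hUVM : (U * Vᵀ)ᵀ * M = V * (D * Vᵀ) := by
    rw [hM]
    simp only [Matrix.transpose_mul, Matrix.transpose_transpose, Matrix.mul_assoc]
    rw [← Matrix.mul_assoc Uᵀ U, hU, Matrix.one_mul]
  have hconj : ∀ (C : Matrix (Fin r) (Fin r) ℝ) (i : Fin n₂),
      u i ⬝ᵥ ((V * (C * Vᵀ)) *ᵥ u i) = (Vᵀ *ᵥ u i) ⬝ᵥ (C *ᵥ (Vᵀ *ᵥ u i)) := by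
    intro C i
    rw [← Matrix.mulVec_mulVec, ← Matrix.mulVec_mulVec, dotProduct_mulVec,
      NNM.vecMul_eq_transpose_mulVec]
  have hDD : D * D = Matrix.diagonal (fun j => σ j * σ j) := by
    rw [hDdef, Matrix.diagonal_mul_diagonal]
  have hkey : ∀ i, (Vᵀ *ᵥ u i) ⬝ᵥ (D *ᵥ (Vᵀ *ᵥ u i)) = Real.sqrt (mu i) := by
    intro i
    set z : Fin r → ℝ := Vᵀ *ᵥ u i with hz
    have he3 : (D * D) *ᵥ z = mu i • z := by
      have h0 := congrArg (fun y => Vᵀ *ᵥ y) (hue' i)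
      rw [hMTM, mulVec_smul] at h0
      calc (D * D) *ᵥ z = ((D * D) * Vᵀ) *ᵥ u i := by
            rw [hz, Matrix.mulVec_mulVec]
        _ = (Vᵀ * (V * ((D * D) * Vᵀ))) *ᵥ u i := by
            rw [← Matrix.mul_assoc, ← Matrix.mul_assoc, hV, Matrix.one_mul]
        _ = Vᵀ *ᵥ ((V * ((D * D) * Vᵀ)) *ᵥ u i) := by rw [Matrix.mulVec_mulVec]
        _ = mu i • z := h0
    have hcoord : ∀ j, σ j * σ j * z j = mu i * z j := by
      intro j
      have := congrFun he3 j
      rwa [hDD, Matrix.mulVec_diagonal, Pi.smul_apply, smul_eq_mul] at this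
    have h1 : mu i * (z ⬝ᵥ z) = mu i := by
      have e1 : u i ⬝ᵥ ((Mᵀ * M) *ᵥ u i) = mu i := by
        rw [hue' i, dotProduct_smul, smul_eq_mul, huo i i, if_pos rfl, mul_one]
      have e2 : u i ⬝ᵥ ((Mᵀ * M) *ᵥ u i) = z ⬝ᵥ ((D * D) *ᵥ z) := by
        rw [hMTM, hconj (D * D) i]
      rw [e2, he3, dotProduct_smul, smul_eq_mul] at e1
      exact e1
    have hform : z ⬝ᵥ (D *ᵥ z) = ∑ j, z j * (σ j * z j) := by
      refine Finset.sum_congr rfl fun j _ => ?_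
      rw [hDdef, Matrix.mulVec_diagonal]
    by_cases hmu : mu i = 0
    · have hzj : ∀ j, z j = 0 := by
        intro j
        have h := hcoord j
        rw [hmu, zero_mul] at h
        have hσσ : σ j * σ j ≠ 0 := ne_of_gt (mul_pos (hσ j) (hσ j))
        exact (mul_eq_zero.mp h).resolve_left hσσ
      rw [hform, hmu, Real.sqrt_zero]
      exact Finset.sum_eq_zero fun j _ => by rw [hzj j, zero_mul]
    · have hzz : z ⬝ᵥ z = 1 := mul_left_cancel₀ hmu (by rw [h1, mul_one])
      have hterm : ∀ j, z j * (σ j * z j) = Real.sqrt (mu i) * (z j * z j) := by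
        intro j
        by_cases hzj : z j = 0
        · rw [hzj]; ring
        · have hσμ : σ j * σ j = mu i := by
            have := hcoord j
            exact mul_right_cancel₀ hzj this
          have : Real.sqrt (mu i) = σ j := by
            rw [← hσμ, Real.sqrt_mul_self (le_of_lt (hσ j))]
          rw [this]; ring
      rw [hform, Finset.sum_congr rfl fun j _ => hterm j, ← Finset.mul_sum]
      have : ∑ j, z j * z j = 1 := hzz
      rw [this, mul_one]
  have htrUVM : trace ((U * Vᵀ)ᵀ * M) = nuclearNorm M := by
    rw [NNM.trace_eq_sum_quad _ u huc, nuclearNorm]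
    refine Finset.sum_congr rfl fun i _ => ?_
    rw [hUVM, hconj D i, hkey i]
    rfl
  -- assembling everything
  have hW₀M : trace (W₀ᵀ * M) = 0 := by
    have hW₀U : W₀ᵀ * U = 0 := by
      have := NNM.transpose_zero_of hUW₀; simpa using this
    rw [hM, Matrix.mul_assoc U, ← Matrix.mul_assoc W₀ᵀ U, hW₀U, Matrix.zero_mul, trace_zero]
  have htrYZ : trace (Yᵀ * Z) = 0 := by
    have hprod : ∀ i j, Y i j * Z i j = 0 := by
      intro i j
      by_cases h : (i, j) ∈ Ω
      · rw [hZΩ i j h, mul_zero]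
      · have h2 := congrFun (congrFun hYΩ i) j
        rw [hPΩ, if_neg h] at h2
        rw [← h2, zero_mul]
    have hform : trace (Yᵀ * Z) = ∑ j, ∑ i, Y i j * Z i j := by
      simp [trace, diag, Matrix.mul_apply]
    rw [hform]
    exact Finset.sum_eq_zero fun j _ => Finset.sum_eq_zero fun i _ => hprod i j
  have hUVZ : trace ((U * Vᵀ)ᵀ * Z) = - trace (Wᵀ * Z) := by
    have hUV : U * Vᵀ = Y - W := by rw [hYdef, add_sub_cancel_right]
    rw [hUV, Matrix.transpose_sub, Matrix.sub_mul, trace_sub, htrYZ, zero_sub]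
  have hsplitW : ∀ W' : Matrix (Fin n₁) (Fin n₂) ℝ, Uᵀ * W' = 0 → W' * V = 0 →
      trace (W'ᵀ * Z) = trace (W'ᵀ * Z₂) := by
    intro W' h1 h2
    have e : W'ᵀ * Z = W'ᵀ * Z₂ + W'ᵀ * (Z - Z₂) := by
      rw [← Matrix.mul_add]
      congr 1
      abel
    rw [e, trace_add, hT W' h1 h2, add_zero]
  have hWZ : trace (Wᵀ * Z) = trace (Wᵀ * Z₂) := hsplitW W hUW hWV
  have hW₀Z : trace (W₀ᵀ * Z) = nuclearNorm Z₂ := by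
    rw [hsplitW W₀ hUW₀ hW₀V, htrW₀Z₂]
  have hWZ₂le : trace (Wᵀ * Z₂) ≤ matSpectralNorm W * nuclearNorm Z₂ :=
    NNM.trace_le_c_mul_nuclear Z₂ W (matSpectralNorm W) (NNM.spectralNorm_nonneg W)
      (fun x => NNM.mulVec_sq_le_spectral W x)
  have hdual : trace (Bᵀ * X) ≤ nuclearNorm X := by
    have := NNM.trace_le_c_mul_nuclear X B 1 zero_le_one hBop
    rwa [one_mul] at this
  have hdecomp : trace (Bᵀ * X) = nuclearNorm M - trace (Wᵀ * Z₂) + nuclearNorm Z₂ := by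
    rw [hXMZ, Matrix.mul_add, trace_add, hBdef, Matrix.transpose_add, Matrix.add_mul,
      Matrix.add_mul, trace_add, trace_add, htrUVM, hW₀M, hUVZ, hWZ, hW₀Z]
    ring
  have hfin : matSpectralNorm W * nuclearNorm Z₂ < nuclearNorm Z₂ := by
    nlinarith [hnucpos, hWnorm]
  linarith [hdual, hdecomp, hWZ₂le, hfin]
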